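/- Let V be a vector space over a field. Then nullity(f) = corank(f) holds for every linear map f : V → V if and only if V is finite-dimensional. -/

import Mathlib

theorem stmt10 {K V : Type*} [Field K] [AddCommGroup V] [Module K V] :
    (∀ f : V →ₗ[K] V,
        Module.rank K (LinearMap.ker f) = Module.rank K (V ⧸ LinearMap.range f)) ↔
      FiniteDimensional K V := by
  constructor
  · intro h
    by_contra hfd
    -- basis of V
    set b := Module.Basis.ofVectorSpace K V with hb
    set ι := Module.Basis.ofVectorSpaceIndex K V
    have hinf : Infinite ι := by
      by_contra hι
      rw [not_infinite_iff_finite] at hι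
      have : Fintype ι := Fintype.ofFinite ι
      exact hfd (Module.Finite.of_basis b)
    have hne : Nonempty ι := inferInstance
    obtain ⟨j₀⟩ := hne
    -- an equiv Option ι ≃ ι
    have hcard : Cardinal.mk (Option ι) = Cardinal.mk ι := by
      simp [Cardinal.mk_option, Cardinal.add_one_eq (Cardinal.infinite_iff.mp hinf)]
    obtain ⟨e⟩ := Cardinal.eq.mp hcard
    -- surjective non-injective g
    set g : ι → ι := fun i => (e.symm i).getD j₀ with hg
    have hgsurj : Function.Surjective g := fun k => ⟨e (some k), by simp [hg]⟩
    have hgne : g (e none) = g (e (some j₀)) := by simp [hg]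
    have hidx : e none ≠ e (some j₀) := by simp
    set f : V →ₗ[K] V := b.constr K (fun i => b (g i)) with hf
    have hfb : ∀ i, f (b i) = b (g i) := fun i => b.constr_basis K _ i
    have hrange : LinearMap.range f = ⊤ := by
      rw [eq_top_iff, ← b.span_eq, Submodule.span_le]
      rintro x ⟨i, rfl⟩
      obtain ⟨j, rfl⟩ := hgsurj i
      exact ⟨b j, by rw [hfb]⟩
    have hker : LinearMap.ker f ≠ ⊥ := by
      intro hk
      have hmem : b (e none) - b (e (some j₀)) ∈ LinearMap.ker f := by
        rw [LinearMap.mem_ker, map_sub, hfb, hfb, hgne, sub_self]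
      rw [hk, Submodule.mem_bot, sub_eq_zero] at hmem
      exact hidx (b.injective hmem)
    have := h f
    rw [hrange] at this
    have hq : Module.rank K (V ⧸ (⊤ : Submodule K V)) = 0 := by
      have : Subsingleton (V ⧸ (⊤ : Submodule K V)) :=
        Submodule.Quotient.subsingleton_iff.mpr rfl
      exact rank_subsingleton' K _
    rw [hq, Submodule.rank_eq_zero] at this
    exact hker this
  · intro hfd f
    have h1 := LinearMap.finrank_range_add_finrank_ker f
    have h2 := Submodule.finrank_quotient_add_finrank (LinearMap.range f)
    have h3 : Module.finrank K (LinearMap.ker f)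
        = Module.finrank K (V ⧸ LinearMap.range f) := by omega
    rw [← Module.finrank_eq_rank, ← Module.finrank_eq_rank, h3]
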